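/- Let f : ℝ² → ℂ be a continuous function satisfying the rectangular functional equation f(a)·f(c) = f(b)·f(d) whenever a, c and b, d are opposite vertices of a rectangle. If f vanishes at one point then f vanishes everywhere. -/
import Mathlib

theorem rectangular_equation_vanishing
    (f : ℝ × ℝ → ℂ) (hf : Continuous f)
    (H : ℝ × ℝ → ℝ × ℝ) (hH : ∀ p : ℝ × ℝ, H p = (-p.2, p.1))
    (heq : ∀ x y : ℝ × ℝ,
      f x * f y = f ((1/2 : ℝ) • (x + y) + H ((1/2 : ℝ) • (x - y)))
                * f ((1/2 : ℝ) • (x + y) - H ((1/2 : ℝ) • (x - y))))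
    (hvan : ∃ x₀ : ℝ × ℝ, f x₀ = 0) :
    ∀ x : ℝ × ℝ, f x = 0 := by
  obtain ⟨x₀, hx₀⟩ := hvan
  intro x
  by_contra hx
  -- key: if f a ≠ 0 and f b ≠ 0 then f at the "other corner" P(a,b) is ≠ 0
  have key : ∀ a b c : ℝ × ℝ, f a ≠ 0 → f b ≠ 0 →
      c = (1/2 : ℝ) • (a + b) + H ((1/2 : ℝ) • (a - b)) → f c ≠ 0 := by
    intro a b c ha hb hc h0
    have h := heq a b
    rw [← hc, h0, zero_mul] at h
    exact mul_ne_zero ha hb h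
  -- explicit form of the corner
  have corner : ∀ a b : ℝ × ℝ,
      (1/2 : ℝ) • (a + b) + H ((1/2 : ℝ) • (a - b))
        = ((a.1 + b.1) / 2 - (a.2 - b.2) / 2, (a.2 + b.2) / 2 + (a.1 - b.1) / 2) := by
    intro a b
    rw [hH]
    simp [Prod.ext_iff, Prod.smul_def]
    constructor <;> ring
  have hopen : IsOpen {p : ℝ × ℝ | f p ≠ 0} :=
    isOpen_compl_iff.mpr (isClosed_eq hf continuous_const)
  obtain ⟨ε, hε, hball⟩ := Metric.isOpen_iff.mp hopen x hx
  have hball' : ∀ y : ℝ × ℝ, dist y x < ε → f y ≠ 0 := fun y hy =>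
    hball (Metric.mem_ball.mpr hy)
  -- growth lemma: ball of nonvanishing doubles
  have grow : ∀ r : ℝ, 0 < r → (∀ y : ℝ × ℝ, dist y x < r → f y ≠ 0) →
      ∀ y : ℝ × ℝ, dist y x < 2 * r → f y ≠ 0 := by
    intro r hr h
    -- step 1: ℓ¹ ball of radius 2r
    have L1 : ∀ z : ℝ × ℝ, |z.1 - x.1| + |z.2 - x.2| < 2 * r → f z ≠ 0 := by
      intro z hz
      set e1 := z.1 - x.1 with he1
      set e2 := z.2 - x.2 with he2
      have ha : f (x.1 + (e1 + e2) / 2, x.2 + (e2 - e1) / 2) ≠ 0 := by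
        apply h
        rw [Prod.dist_eq]
        simp only [Real.dist_eq]
        have h1 : |e1 + e2| / 2 < r := by
          rcases abs_cases (e1 + e2) with ⟨h', _⟩ | ⟨h', _⟩ <;>
            rcases abs_cases e1 with ⟨a1, _⟩ | ⟨a1, _⟩ <;>
            rcases abs_cases e2 with ⟨a2, _⟩ | ⟨a2, _⟩ <;> linarith
        have h2 : |e2 - e1| / 2 < r := by
          rcases abs_cases (e2 - e1) with ⟨h', _⟩ | ⟨h', _⟩ <;>
            rcases abs_cases e1 with ⟨a1, _⟩ | ⟨a1, _⟩ <;>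
            rcases abs_cases e2 with ⟨a2, _⟩ | ⟨a2, _⟩ <;> linarith
        rw [max_lt_iff]
        constructor
        · have : x.1 + (e1 + e2) / 2 - x.1 = (e1 + e2) / 2 := by ring
          rw [this]
          calc |(e1 + e2) / 2| = |e1 + e2| / 2 := by rw [abs_div]; simp
            _ < r := h1
        · have : x.2 + (e2 - e1) / 2 - x.2 = (e2 - e1) / 2 := by ring
          rw [this]
          calc |(e2 - e1) / 2| = |e2 - e1| / 2 := by rw [abs_div]; simp
            _ < r := h2
      have hb : f (x.1 + (e1 - e2) / 2, x.2 + (e1 + e2) / 2) ≠ 0 := by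
        apply h
        rw [Prod.dist_eq]
        simp only [Real.dist_eq]
        have h1 : |e1 - e2| / 2 < r := by
          rcases abs_cases (e1 - e2) with ⟨h', _⟩ | ⟨h', _⟩ <;>
            rcases abs_cases e1 with ⟨a1, _⟩ | ⟨a1, _⟩ <;>
            rcases abs_cases e2 with ⟨a2, _⟩ | ⟨a2, _⟩ <;> linarith
        have h2 : |e1 + e2| / 2 < r := by
          rcases abs_cases (e1 + e2) with ⟨h', _⟩ | ⟨h', _⟩ <;>
            rcases abs_cases e1 with ⟨a1, _⟩ | ⟨a1, _⟩ <;>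
            rcases abs_cases e2 with ⟨a2, _⟩ | ⟨a2, _⟩ <;> linarith
        rw [max_lt_iff]
        constructor
        · have : x.1 + (e1 - e2) / 2 - x.1 = (e1 - e2) / 2 := by ring
          rw [this]
          calc |(e1 - e2) / 2| = |e1 - e2| / 2 := by rw [abs_div]; simp
            _ < r := h1
        · have : x.2 + (e1 + e2) / 2 - x.2 = (e1 + e2) / 2 := by ring
          rw [this]
          calc |(e1 + e2) / 2| = |e1 + e2| / 2 := by rw [abs_div]; simp
            _ < r := h2
      refine key _ _ z ha hb ?_
      rw [corner, Prod.ext_iff]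
      constructor <;> simp only [he1, he2] <;> ring
    -- step 2: ℓ∞ ball of radius 2r from ℓ¹ ball of radius 2r
    intro y hy
    rw [Prod.dist_eq, Real.dist_eq, Real.dist_eq, max_lt_iff] at hy
    obtain ⟨hy1, hy2⟩ := hy
    set d1 := y.1 - x.1 with hd1
    set d2 := y.2 - x.2 with hd2
    have ha : f (x.1 + (d1 + d2) / 2, x.2 + (d2 - d1) / 2) ≠ 0 := by
      apply L1
      have e1 : x.1 + (d1 + d2) / 2 - x.1 = (d1 + d2) / 2 := by ring
      have e2 : x.2 + (d2 - d1) / 2 - x.2 = (d2 - d1) / 2 := by ring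
      simp only [e1, e2]
      rcases abs_cases ((d1 + d2) / 2) with ⟨h', _⟩ | ⟨h', _⟩ <;>
        rcases abs_cases ((d2 - d1) / 2) with ⟨h'', _⟩ | ⟨h'', _⟩ <;>
        rcases abs_cases d1 with ⟨a1, _⟩ | ⟨a1, _⟩ <;>
        rcases abs_cases d2 with ⟨a2, _⟩ | ⟨a2, _⟩ <;> linarith
    have hb : f (x.1 + (d1 - d2) / 2, x.2 + (d1 + d2) / 2) ≠ 0 := by
      apply L1
      have e1 : x.1 + (d1 - d2) / 2 - x.1 = (d1 - d2) / 2 := by ring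
      have e2 : x.2 + (d1 + d2) / 2 - x.2 = (d1 + d2) / 2 := by ring
      simp only [e1, e2]
      rcases abs_cases ((d1 + d2) / 2) with ⟨h', _⟩ | ⟨h', _⟩ <;>
        rcases abs_cases ((d1 - d2) / 2) with ⟨h'', _⟩ | ⟨h'', _⟩ <;>
        rcases abs_cases d1 with ⟨a1, _⟩ | ⟨a1, _⟩ <;>
        rcases abs_cases d2 with ⟨a2, _⟩ | ⟨a2, _⟩ <;> linarith
    refine key _ _ y ha hb ?_
    rw [corner, Prod.ext_iff]
    constructor <;> simp only [hd1, hd2] <;> ring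
  -- induction
  have ind : ∀ n : ℕ, ∀ y : ℝ × ℝ, dist y x < ε * 2 ^ n → f y ≠ 0 := by
    intro n
    induction n with
    | zero => simpa using hball'
    | succ n ih =>
      have h2 : ε * 2 ^ (n + 1) = 2 * (ε * 2 ^ n) := by ring
      rw [h2]
      exact grow (ε * 2 ^ n) (by positivity) ih
  obtain ⟨n, hn⟩ := pow_unbounded_of_one_lt (dist x₀ x / ε) (by norm_num : (1:ℝ) < 2)
  have : dist x₀ x < ε * 2 ^ n := by
    rw [div_lt_iff₀ hε] at hn
    linarith
  exact ind n x₀ this hx₀
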